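/- Let S be a ℤ-graded commutative ring and f ∈ S homogeneous. If the annihilator of f in S is nonzero after localizing at some prime p, then it is nonzero after localizing at the prime p* generated by the homogeneous elements of p. Consequently, a homogeneous element f is a nonzerodivisor on S if and only if it is a nonzerodivisor on S_p for every homogeneous prime p. -/

import Mathlib

open DirectSum

/-- The annihilator of a homogeneous element is a homogeneous ideal. -/
private lemma ann_homogeneous {S : Type*} [CommRing S] (𝒜 : ℤ → AddSubgroup S) [GradedRing 𝒜]
    {x : S} {e : ℤ} (hx : x ∈ 𝒜 e) :
    Ideal.IsHomogeneous 𝒜 (LinearMap.ker (LinearMap.toSpanSingleton S S x)) := by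
  intro i s hs
  rw [LinearMap.mem_ker, LinearMap.toSpanSingleton_apply, smul_eq_mul] at hs ⊢
  have h := DirectSum.coe_decompose_mul_add_of_right_mem 𝒜 (i := i) hx (a := s)
  rw [hs, DirectSum.decompose_zero] at h
  simpa using h.symm

private lemma algMap_loc_eq_zero_iff {S : Type*} [CommRing S] (p : Ideal S) [p.IsPrime] (x : S) :
    algebraMap S (Localization.AtPrime p) x = 0 ↔ ∃ t ∉ p, t * x = 0 := by
  rw [IsLocalization.map_eq_zero_iff p.primeCompl]
  exact ⟨fun ⟨⟨t, ht⟩, h⟩ => ⟨t, ht, h⟩, fun ⟨t, ht, h⟩ => ⟨⟨t, ht⟩, h⟩⟩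

/-- If `x` annihilates `f`, `x` is not killed by the localization map at `p`, then some
homogeneous component of `x` annihilates `f` and has annihilator contained in `p`. -/
private lemma exists_component {S : Type*} [CommRing S] (𝒜 : ℤ → AddSubgroup S) [GradedRing 𝒜]
    {f : S} {d : ℤ} (hf : f ∈ 𝒜 d) {x : S} (hx : x * f = 0)
    {p : Ideal S} (hp : p.IsPrime)
    (hxp : ∀ t ∉ p, t * x ≠ 0) :
    ∃ i : ℤ, (decompose 𝒜 x i : S) * f = 0 ∧
      LinearMap.ker (LinearMap.toSpanSingleton S S ((decompose 𝒜 x i : S))) ≤ p := by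
  classical
  have hIhom := ann_homogeneous 𝒜 hf
  have hxI : x ∈ LinearMap.ker (LinearMap.toSpanSingleton S S f) := by
    rw [LinearMap.mem_ker, LinearMap.toSpanSingleton_apply, smul_eq_mul]; exact hx
  by_contra hcon
  push_neg at hcon
  -- for each i, choose t i ∉ p with t i * (x i) = 0
  have key : ∀ i : ℤ, ∃ t, t ∉ p ∧ t * (decompose 𝒜 x i : S) = 0 := by
    intro i
    have hcomp : (decompose 𝒜 x i : S) * f = 0 := by
      have := hIhom i hxI
      rwa [LinearMap.mem_ker, LinearMap.toSpanSingleton_apply, smul_eq_mul] at this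
    obtain ⟨t, htann, htp⟩ := SetLike.not_le_iff_exists.mp (hcon i hcomp)
    rw [LinearMap.mem_ker, LinearMap.toSpanSingleton_apply, smul_eq_mul] at htann
    refine ⟨t, htp, ?_⟩
    exact not_not.mp (by simpa using htann)
  choose t htp ht0 using key
  set T : S := ∏ i ∈ DFinsupp.support (decompose 𝒜 x), t i with hT
  have hTp : T ∉ p := by
    intro h
    obtain ⟨i, _, hi⟩ := Ideal.IsPrime.prod_mem_iff.mp h
    exact htp i hi
  refine hxp T hTp ?_
  have : T * x = ∑ i ∈ DFinsupp.support (decompose 𝒜 x), T * (decompose 𝒜 x i : S) := by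
    rw [← Finset.mul_sum, DirectSum.sum_support_decompose]
  rw [this]
  refine Finset.sum_eq_zero fun i hi => ?_
  have : T = (∏ j ∈ (DFinsupp.support (decompose 𝒜 x)).erase i, t j) * t i := by
    rw [hT, ← Finset.prod_erase_mul _ _ hi]
  rw [this, mul_assoc, ht0 i, mul_zero]

private lemma mem_ann_iff {S : Type*} [CommRing S] (x f : S) :
    x ∈ LinearMap.ker (LinearMap.toSpanSingleton S S f) ↔ x * f = 0 := by
  rw [LinearMap.mem_ker, LinearMap.toSpanSingleton_apply, smul_eq_mul]

private lemma ann_le_core {S : Type*} [CommRing S] (𝒜 : ℤ → AddSubgroup S) [GradedRing 𝒜]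
    {x : S} {e : ℤ} (hx : x ∈ 𝒜 e) {p : Ideal S}
    (h : LinearMap.ker (LinearMap.toSpanSingleton S S x) ≤ p) :
    LinearMap.ker (LinearMap.toSpanSingleton S S x) ≤ (p.homogeneousCore 𝒜).toIdeal :=
  (ann_homogeneous 𝒜 hx).toIdeal_homogeneousCore_eq_self ▸ Ideal.homogeneousCore_mono 𝒜 h

theorem annihilator_localization_homogeneous_core
    (S : Type*) [CommRing S] (𝒜 : ℤ → AddSubgroup S) [GradedRing 𝒜]
    (f : S) (d : ℤ) (hf : f ∈ 𝒜 d) :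
    letI I : Ideal S := LinearMap.ker (LinearMap.toSpanSingleton S S f)
    (∀ (p : Ideal S) (hp : p.IsPrime),
      haveI := hp
      haveI := hp.homogeneousCore (𝒜 := 𝒜)
      I.map (algebraMap S (Localization.AtPrime p)) ≠ ⊥ →
      I.map (algebraMap S (Localization.AtPrime (p.homogeneousCore 𝒜).toIdeal)) ≠ ⊥) ∧
    (IsSMulRegular S f ↔
      ∀ (p : Ideal S) (hp : p.IsPrime), p.IsHomogeneous 𝒜 →
        haveI := hp
        IsSMulRegular (Localization.AtPrime p) (algebraMap S (Localization.AtPrime p) f)) := by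
  classical
  constructor
  · intro p hp hne
    haveI := hp
    haveI := hp.homogeneousCore (𝒜 := 𝒜)
    rw [Ne, Ideal.map_eq_bot_iff_le_ker] at hne
    obtain ⟨x, hxI, hxk⟩ := SetLike.not_le_iff_exists.mp hne
    have hxf : x * f = 0 := (mem_ann_iff x f).mp hxI
    have hxp : ∀ t ∉ p, t * x ≠ 0 := fun t htp ht0 =>
      hxk (by rw [RingHom.mem_ker]; exact (algMap_loc_eq_zero_iff p x).mpr ⟨t, htp, ht0⟩)
    obtain ⟨i, hif, hann⟩ := exists_component 𝒜 hf hxf hp hxp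
    have hannle := ann_le_core 𝒜 (SetLike.coe_mem (DirectSum.decompose 𝒜 x i)) hann
    rw [Ne, Ideal.map_eq_bot_iff_le_ker]
    intro h
    have hmem := h ((mem_ann_iff _ f).mpr hif)
    rw [RingHom.mem_ker] at hmem
    obtain ⟨t, htp, ht0⟩ := (algMap_loc_eq_zero_iff _ _).mp hmem
    exact htp (hannle ((mem_ann_iff _ _).mpr ht0))
  · constructor
    · intro hreg p hp hhom
      haveI := hp
      intro y z hyz
      have hyz' : (algebraMap S (Localization.AtPrime p) f) • y =
          (algebraMap S (Localization.AtPrime p) f) • z := hyz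
      have h0 : (algebraMap S (Localization.AtPrime p) f) * (y - z) = 0 := by
        rw [mul_sub, ← smul_eq_mul, ← smul_eq_mul, hyz', sub_self]
      obtain ⟨⟨a, s⟩, has : IsLocalization.mk' (Localization.AtPrime p) a s = y - z⟩ :=
        IsLocalization.mk'_surjective p.primeCompl (y - z)
      rw [← has, IsLocalization.mul_mk'_eq_mk'_of_mul, IsLocalization.mk'_eq_zero_iff] at h0
      obtain ⟨t, ht⟩ := h0
      have h1 : f • ((t : S) * a) = f • (0 : S) := by
        rw [smul_zero, smul_eq_mul]
        linear_combination ht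
      have h2 := hreg h1
      have : IsLocalization.mk' (Localization.AtPrime p) a s = 0 :=
        (IsLocalization.mk'_eq_zero_iff a s).mpr ⟨t, h2⟩
      rw [this] at has
      exact sub_eq_zero.mp has.symm
    · intro hloc
      intro a b hab
      by_contra hne
      have hc : (a - b) * f = 0 := by
        rw [sub_mul, sub_eq_zero, mul_comm, mul_comm b f]
        exact hab
      set c := a - b with hcdef
      have hc0 : c ≠ 0 := fun h => hne (sub_eq_zero.mp h)
      have hex : ∃ i, (DirectSum.decompose 𝒜 c i : S) ≠ 0 := by
        by_contra h
        push_neg at h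
        refine hc0 ?_
        rw [← DirectSum.sum_support_decompose 𝒜 c]
        exact Finset.sum_eq_zero fun i _ => h i
      obtain ⟨i, hci⟩ := hex
      have hcif : (DirectSum.decompose 𝒜 c i : S) * f = 0 :=
        (mem_ann_iff _ f).mp (ann_homogeneous 𝒜 hf i ((mem_ann_iff c f).mpr hc))
      have hannne : LinearMap.ker
          (LinearMap.toSpanSingleton S S ((DirectSum.decompose 𝒜 c i : S))) ≠ ⊤ := by
        intro h
        have h1 := (mem_ann_iff (1 : S) _).mp (h ▸ Submodule.mem_top)
        rw [one_mul] at h1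
        exact hci h1
      obtain ⟨m, hm, hle⟩ := Ideal.exists_le_maximal _ hannne
      haveI := hm.isPrime
      haveI := hm.isPrime.homogeneousCore (𝒜 := 𝒜)
      have hple := ann_le_core 𝒜 (SetLike.coe_mem (DirectSum.decompose 𝒜 c i)) hle
      set p := (m.homogeneousCore 𝒜).toIdeal with hpdef
      have hreg' := hloc p inferInstance (m.homogeneousCore 𝒜).isHomogeneous
      have h1 : (algebraMap S (Localization.AtPrime p) f) •
          (algebraMap S (Localization.AtPrime p) ((DirectSum.decompose 𝒜 c i : S))) =
          (algebraMap S (Localization.AtPrime p) f) • (0 : Localization.AtPrime p) := by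
        rw [smul_zero, smul_eq_mul, ← map_mul, mul_comm, hcif, map_zero]
      have h2 := hreg' h1
      obtain ⟨t, htp, ht0⟩ := (algMap_loc_eq_zero_iff p _).mp h2
      exact htp (hple ((mem_ann_iff _ _).mpr ht0))
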